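/- Let a, b, c, d be nonzero reals, e real, with δ = (ad+bc+e²)(ad+bc−e²)(ad−bc+e²)(ad−bc−e²) ≥ 0, ρ = (a²d² + b²c² − e⁴ + √δ)/(2a²b²), and κ = abρ/(cd). Suppose 𝒬(u,v) = a²u²v² − b²u² − c²v² + d² − 2e²uv = 0 with a²u² − c² ≠ 0 and ρ > 0. Set ω = u/√ρ and ξ = ((a²u² − c²)v − e²u)/(cd). Then ξ² = (1 − ω²)(1 − κ²ω²). -/

import Mathlib

/-- the birational transformation to the Jacobi quartic curve. -/
theorem stmt13 (a b c d e δ ρ κ u v ω ξ : ℝ)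
    (ha : a ≠ 0) (hb : b ≠ 0) (hc : c ≠ 0) (hd : d ≠ 0)
    (hδ : δ = (a * d + b * c + e ^ 2) * (a * d + b * c - e ^ 2) *
      ((a * d - b * c + e ^ 2) * (a * d - b * c - e ^ 2)))
    (hδ0 : 0 ≤ δ)
    (hρ : ρ = (a ^ 2 * d ^ 2 + b ^ 2 * c ^ 2 - e ^ 4 + Real.sqrt δ) / (2 * a ^ 2 * b ^ 2))
    (hρ0 : 0 < ρ)
    (hκ : κ = a * b * ρ / (c * d))
    (hQ : a ^ 2 * u ^ 2 * v ^ 2 - b ^ 2 * u ^ 2 - c ^ 2 * v ^ 2 + d ^ 2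
      - 2 * e ^ 2 * u * v = 0)
    (hu : a ^ 2 * u ^ 2 - c ^ 2 ≠ 0)
    (hω : ω = u / Real.sqrt ρ)
    (hξ : ξ = ((a ^ 2 * u ^ 2 - c ^ 2) * v - e ^ 2 * u) / (c * d)) :
    ξ ^ 2 = (1 - ω ^ 2) * (1 - κ ^ 2 * ω ^ 2) := by
  have hs : Real.sqrt δ ^ 2 = δ := Real.sq_sqrt hδ0
  have h1 : 2 * a ^ 2 * b ^ 2 * ρ - (a ^ 2 * d ^ 2 + b ^ 2 * c ^ 2 - e ^ 4) = Real.sqrt δ := by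
    rw [hρ]; field_simp; ring
  have h2 : (2 * a ^ 2 * b ^ 2 * ρ - (a ^ 2 * d ^ 2 + b ^ 2 * c ^ 2 - e ^ 4)) ^ 2 = δ := by
    rw [h1]; exact hs
  rw [hδ] at h2
  have ha2 : (4 : ℝ) * a ^ 2 * b ^ 2 ≠ 0 := by positivity
  have key : a ^ 2 * b ^ 2 * ρ ^ 2 - (a ^ 2 * d ^ 2 + b ^ 2 * c ^ 2 - e ^ 4) * ρ + c ^ 2 * d ^ 2 = 0 := by
    apply mul_left_cancel₀ ha2
    linear_combination h2
  have hsr : Real.sqrt ρ ^ 2 = ρ := Real.sq_sqrt hρ0.le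
  have main : ρ * (((a ^ 2 * u ^ 2 - c ^ 2) * v - e ^ 2 * u) ^ 2)
      = (ρ - u ^ 2) * (c ^ 2 * d ^ 2 - a ^ 2 * b ^ 2 * ρ * u ^ 2) := by
    linear_combination ρ * (a ^ 2 * u ^ 2 - c ^ 2) * hQ + u ^ 2 * key
  have hω2 : ω ^ 2 = u ^ 2 / ρ := by rw [hω, div_pow, hsr]
  rw [hξ, hω2, hκ]
  have hρne := hρ0.ne'
  field_simp
  linear_combination main
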